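/- Let (W,S) be a Coxeter system with simple roots Π = {α_s} in the standard geometric representation. If w ∈ W, I, J ⊆ S are such that I ∩ J = ∅, w·Π_I = Π_I, and w·α_s is a negative root for every s ∈ J, then the set of positive roots in Φ_{I∪J} sent by w to negative roots is exactly Φ⁺_{I∪J} ∖ Φ_I. -/

import Mathlib

open Real

/-- The standard bilinear form of a Coxeter matrix on `B →₀ ℝ`:
`⟨α_s, α_t⟩ = -cos (π / m(s,t))`, interpreted as `-1` when `m(s,t) = ∞`
(encoded as `0`). -/
noncomputable def cForm {B : Type*} (M : CoxeterMatrix B) (v w : B →₀ ℝ) : ℝ :=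
  v.sum fun s c => w.sum fun t d =>
    c * d * (if M s t = 0 then -1 else -Real.cos (Real.pi / (M s t : ℝ)))

/-- The simple root `α_s` as a basis vector of `B →₀ ℝ`. -/
noncomputable def simpleRoot {B : Type*} (s : B) : B →₀ ℝ := Finsupp.single s 1

/-- The root system `Φ = W · Π`. -/
def rootSet {B W : Type*} [Group W] {M : CoxeterMatrix B} (_ : CoxeterSystem M W)
    (ρ : W →* ((B →₀ ℝ) ≃ₗ[ℝ] (B →₀ ℝ))) : Set (B →₀ ℝ) :=
  {v | ∃ (w : W) (s : B), v = ρ w (simpleRoot s)}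

namespace Stmt8Aux

open List CoxeterSystem

theorem lequiv_mul_apply {B : Type*} (e₁ e₂ : (B →₀ ℝ) ≃ₗ[ℝ] (B →₀ ℝ)) (x : B →₀ ℝ) :
    (e₁ * e₂) x = e₁ (e₂ x) := rfl

theorem lequiv_one_apply {B : Type*} (x : B →₀ ℝ) :
    (1 : (B →₀ ℝ) ≃ₗ[ℝ] (B →₀ ℝ)) x = x := rfl

variable {B W : Type*} [Group W] {M : CoxeterMatrix B} (cs : CoxeterSystem M W)
  (ρ : W →* ((B →₀ ℝ) ≃ₗ[ℝ] (B →₀ ℝ)))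

theorem cForm_single_single (a b : B) :
    cForm M (simpleRoot a) (simpleRoot b) =
      (if M a b = 0 then -1 else -Real.cos (Real.pi / (M a b : ℝ))) := by
  simp [cForm, simpleRoot, Finsupp.sum_single_index]

/-- The scalar `2 cos (π / m)`, with `2` when `m = 0` (i.e. `m = ∞`). -/
noncomputable def cval (m : ℕ) : ℝ :=
  if m = 0 then 2 else 2 * Real.cos (Real.pi / (m : ℝ))

theorem cval_nonneg {m : ℕ} (hm : m ≠ 1) : 0 ≤ cval m := by
  unfold cval
  split_ifs with h
  · norm_num
  · have h2 : 2 ≤ m := by omega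
    have : (0:ℝ) < m := by positivity
    have h1 : Real.pi / m ≤ Real.pi / 2 := by
      apply div_le_div_of_nonneg_left Real.pi_pos.le (by norm_num)
      exact_mod_cast h2
    have h0 : 0 ≤ Real.pi / m := by positivity
    have := Real.cos_nonneg_of_mem_Icc (x := Real.pi / m)
      ⟨by linarith [Real.pi_pos], h1⟩
    linarith



/-- `sin (j π / m) / sin (π / m)`, with the degenerate (`m = ∞`) value `j`. -/
noncomputable def Sfun (m : ℕ) (j : ℕ) : ℝ :=
  if m = 0 then j else Real.sin (j * (Real.pi / m)) / Real.sin (Real.pi / m)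

theorem Sfun_zero (m : ℕ) : Sfun m 0 = 0 := by simp [Sfun]

theorem sin_div_pos {m : ℕ} (hm : 2 ≤ m) : 0 < Real.sin (Real.pi / m) := by
  apply Real.sin_pos_of_pos_of_lt_pi
  · positivity
  · apply div_lt_self Real.pi_pos
    exact_mod_cast hm

theorem Sfun_one {m : ℕ} (hm : m ≠ 1) : Sfun m 1 = 1 := by
  unfold Sfun
  split_ifs with h
  · norm_num
  · rw [Nat.cast_one, one_mul, div_self (sin_div_pos (by omega)).ne']

theorem Sfun_rec {m : ℕ} (hm : m ≠ 1) (j : ℕ) :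
    Sfun m (j + 2) = cval m * Sfun m (j + 1) - Sfun m j := by
  unfold Sfun cval
  split_ifs with h
  · push_cast; ring
  · have hs := (sin_div_pos (m := m) (by omega)).ne'
    set θ := Real.pi / m with hθ
    field_simp
    have h2 : ((j:ℝ) + 2) * θ = ((j:ℝ) + 1) * θ + θ := by ring
    have h0 : (j:ℝ) * θ = ((j:ℝ) + 1) * θ - θ := by ring
    push_cast
    rw [h2, mul_comm θ, mul_comm θ, h0, Real.sin_add, Real.sin_sub]
    ring

theorem Sfun_nonneg {m j : ℕ} (hj : m = 0 ∨ j ≤ m) : 0 ≤ Sfun m j := by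
  unfold Sfun
  split_ifs with h
  · positivity
  · have hjm : j ≤ m := hj.resolve_left h
    have hm1 : 1 ≤ m := by omega
    have hmR : (0:ℝ) < m := by positivity
    apply div_nonneg
    · apply Real.sin_nonneg_of_nonneg_of_le_pi
      · positivity
      · rw [← mul_div_assoc, div_le_iff₀ hmR]
        nlinarith [Real.pi_pos, (by exact_mod_cast hjm : (j:ℝ) ≤ m)]
    · apply Real.sin_nonneg_of_nonneg_of_le_pi
      · positivity
      · rw [div_le_iff₀ hmR]
        nlinarith [Real.pi_pos, (by exact_mod_cast hm1 : (1:ℝ) ≤ m)]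

theorem alternatingWord_mem {a b : B} {k : ℕ} :
    ∀ x ∈ alternatingWord a b k, x = a ∨ x = b := by
  induction k generalizing a b with
  | zero => simp [alternatingWord]
  | succ k ih =>
    rw [alternatingWord_succ']
    intro x hx
    rcases List.mem_cons.mp hx with h | h
    · subst h; split_ifs <;> tauto
    · exact ih x h

theorem shorten_of_not_chain :
    ∀ ω : List B, ¬ List.Chain' (· ≠ ·) ω →
    ∃ ω' : List B, ω'.length + 2 = ω.length ∧ (∀ x ∈ ω', x ∈ ω) ∧
      cs.wordProd ω' = cs.wordProd ω := by
  intro ω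
  induction ω with
  | nil => intro h; exact (h List.isChain_nil).elim
  | cons x rest ih =>
    intro h
    cases rest with
    | nil => exact (h (List.isChain_singleton x)).elim
    | cons y rest' =>
      by_cases hxy : x = y
      · refine ⟨rest', by simp, fun z hz => by simp [hz], ?_⟩
        rw [wordProd_cons, wordProd_cons, hxy, cs.simple_mul_simple_cancel_left]
      · have hch : ¬ List.Chain' (· ≠ ·) (y :: rest') := by
          exact fun hc => h (List.isChain_cons_cons.mpr ⟨hxy, hc⟩)
        obtain ⟨ω'', h1, h2, h3⟩ := ih hch
        refine ⟨x :: ω'', by simp [← h1], ?_, ?_⟩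
        · intro z hz
          rcases List.mem_cons.mp hz with rfl | hz
          · exact List.mem_cons_self
          · exact List.mem_cons_of_mem _ (h2 z hz)
        · rw [wordProd_cons, wordProd_cons, h3]

theorem chain_st_eq_alt {a b : B} (hab : a ≠ b) :
    ∀ ω : List B, (∀ x ∈ ω, x = a ∨ x = b) → List.Chain' (· ≠ ·) ω →
      ω = alternatingWord a b ω.length ∨ ω = alternatingWord b a ω.length := by
  intro ω
  induction ω with
  | nil => intro _ _; left; rfl
  | cons x rest ih =>
    intro hmem hch
    have hrest := ih (fun y hy => hmem y (List.mem_cons_of_mem _ hy)) hch.tail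
    have hxmem := hmem x List.mem_cons_self
    rcases Nat.eq_zero_or_pos rest.length with h0 | hpos
    · have hnil : rest = [] := List.length_eq_zero_iff.mp h0
      subst hnil
      rcases hxmem with rfl | rfl
      · right
        rw [show (x :: ([] : List B)).length = 0 + 1 by simp, alternatingWord_succ']
        simp [alternatingWord]
      · left
        rw [show (x :: ([] : List B)).length = 0 + 1 by simp, alternatingWord_succ']
        simp [alternatingWord]
    · obtain ⟨n, hn⟩ : ∃ n, rest.length = n + 1 := ⟨rest.length - 1, by omega⟩
      rcases hrest with h' | h'
      · rw [hn] at h'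
        have hx : x ≠ (if Even n then b else a) := by
          rw [h', alternatingWord_succ'] at hch
          exact (List.isChain_cons_cons.mp hch).1
        have hxval : x = (if Even (n+1) then b else a) := by
          rcases Nat.even_or_odd n with he | ho
          · have : ¬ Even (n+1) := by simp [Nat.even_add_one, he]
            rw [if_pos he] at hx
            rw [if_neg this]
            tauto
          · have he1 : Even (n+1) := Nat.even_add_one.mpr (Nat.not_even_iff_odd.mpr ho)
            rw [if_neg (Nat.not_even_iff_odd.mpr ho)] at hx
            rw [if_pos he1]
            tauto
        left
        rw [show (x :: rest).length = n + 1 + 1 by simp [hn], alternatingWord_succ', ← h',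
          ← hxval]
      · rw [hn] at h'
        have hx : x ≠ (if Even n then a else b) := by
          rw [h', alternatingWord_succ'] at hch
          exact (List.isChain_cons_cons.mp hch).1
        have hxval : x = (if Even (n+1) then a else b) := by
          rcases Nat.even_or_odd n with he | ho
          · have : ¬ Even (n+1) := by simp [Nat.even_add_one, he]
            rw [if_pos he] at hx
            rw [if_neg this]
            tauto
          · have he1 : Even (n+1) := Nat.even_add_one.mpr (Nat.not_even_iff_odd.mpr ho)
            rw [if_neg (Nat.not_even_iff_odd.mpr ho)] at hx
            rw [if_pos he1]
            tauto
        right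
        rw [show (x :: rest).length = n + 1 + 1 by simp [hn], alternatingWord_succ', ← h',
          ← hxval]

theorem alt_decomp (a b : B) (m d : ℕ) :
    ∃ pre : List B, (∀ x ∈ pre, x = a ∨ x = b) ∧ pre.length = d ∧
      alternatingWord a b (m + d) = pre ++ alternatingWord a b m := by
  induction d with
  | zero => exact ⟨[], by simp, rfl, by simp⟩
  | succ d ih =>
    obtain ⟨pre, h1, h2, h3⟩ := ih
    refine ⟨(if Even (m + d) then b else a) :: pre, ?_, by simp [h2], ?_⟩
    · intro x hx
      rcases List.mem_cons.mp hx with rfl | hx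
      · split_ifs <;> tauto
      · exact h1 x hx
    · rw [show m + (d + 1) = (m + d) + 1 from rfl, alternatingWord_succ', h3]
      rfl

section rho

variable (hρ : ∀ (s : B) (v : B →₀ ℝ),
      ρ (cs.simple s) v = v - (2 * cForm M (simpleRoot s) v) • simpleRoot s)
include hρ

theorem rho_simple_self (a : B) :
    ρ (cs.simple a) (simpleRoot a) = -simpleRoot a := by
  rw [hρ, cForm_single_single, M.diagonal]
  norm_num
  module

theorem rho_simple_other {a b : B} (hab : a ≠ b) :
    ρ (cs.simple a) (simpleRoot b) = simpleRoot b + cval (M a b) • simpleRoot a := by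
  rw [hρ, cForm_single_single]
  unfold cval
  split_ifs with h
  · module
  · module

theorem rho_alt {a b : B} (hab : a ≠ b) (k : ℕ) :
    ρ (cs.wordProd (alternatingWord a b k)) (simpleRoot a) =
      (if Even k then Sfun (M a b) (k+1) else Sfun (M a b) k) • simpleRoot a +
      (if Even k then Sfun (M a b) k else Sfun (M a b) (k+1)) • simpleRoot b := by
  have hm1 : M a b ≠ 1 := M.off_diagonal a b hab
  induction k with
  | zero =>
    rw [show alternatingWord a b 0 = [] from rfl, wordProd_nil, map_one, lequiv_one_apply,
      if_pos Even.zero, if_pos Even.zero, Sfun_zero, Sfun_one hm1]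
    module
  | succ k ih =>
    have hrec : Sfun (M a b) (k + 1 + 1)
        = cval (M a b) * Sfun (M a b) (k + 1) - Sfun (M a b) k := Sfun_rec hm1 k
    rcases Nat.even_or_odd k with hk | hk
    · have hk1 : ¬ Even (k + 1) := by simp [Nat.even_add_one, hk]
      rw [alternatingWord_succ', if_pos hk, wordProd_cons, map_mul, lequiv_mul_apply, ih,
        if_pos hk, if_pos hk, if_neg hk1, if_neg hk1, map_add, map_smul, map_smul,
        rho_simple_self cs ρ hρ b,
        rho_simple_other cs ρ hρ hab.symm, ← M.symmetric a b, hrec]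
      module
    · have hk' : ¬ Even k := Nat.not_even_iff_odd.mpr hk
      have hk1 : Even (k + 1) := Nat.even_add_one.mpr hk'
      rw [alternatingWord_succ', if_neg hk', wordProd_cons, map_mul, lequiv_mul_apply, ih,
        if_neg hk', if_neg hk', if_pos hk1, if_pos hk1, map_add, map_smul, map_smul,
        rho_simple_self cs ρ hρ a,
        rho_simple_other cs ρ hρ hab, hrec]
      module

/-- The key dihedral lemma: if `u` has a minimal `{a,b}`-word of length `k` and every
`{a,b}`-word for `u * a` is longer than `k`, then `u α_a` lies in the cone spanned by
`α_a, α_b`. -/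
theorem cone {a b : B} (hab : a ≠ b) (u : W) (k : ℕ) (ωm : List B)
    (hstm : ∀ x ∈ ωm, x = a ∨ x = b) (hlen : ωm.length = k) (hπm : cs.wordProd ωm = u)
    (hmin : ∀ ω' : List B, (∀ x ∈ ω', x = a ∨ x = b) → cs.wordProd ω' = u → k ≤ ω'.length)
    (hs : ∀ ω' : List B, (∀ x ∈ ω', x = a ∨ x = b) →
      cs.wordProd ω' = u * cs.simple a → k < ω'.length) :
    ∃ p q : ℝ, 0 ≤ p ∧ 0 ≤ q ∧
      ρ u (simpleRoot a) = p • simpleRoot a + q • simpleRoot b := by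
  have hm1 : M a b ≠ 1 := M.off_diagonal a b hab
  have hchain : List.Chain' (· ≠ ·) ωm := by
    by_contra h
    obtain ⟨ω', h1, h2, h3⟩ := shorten_of_not_chain cs ωm h
    have := hmin ω' (fun x hx => hstm x (h2 x hx)) (h3.trans hπm)
    omega
  have hclass := chain_st_eq_alt hab ωm hstm hchain
  rw [hlen] at hclass
  rcases Nat.eq_zero_or_pos k with hk0 | hkpos
  · subst hk0
    have hω : ωm = [] := List.length_eq_zero_iff.mp hlen
    rw [hω, wordProd_nil] at hπm
    refine ⟨1, 0, zero_le_one, le_refl 0, ?_⟩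
    rw [← hπm, map_one, lequiv_one_apply]
    module
  obtain ⟨k', hkk⟩ : ∃ k', k = k' + 1 := ⟨k - 1, by omega⟩
  rcases hclass with hA | hB
  swap
  · -- ωm ends with the letter `a`; impossible
    exfalso
    have hcon : cs.wordProd (alternatingWord a b k') = u * cs.simple a := by
      have : u * cs.simple a * cs.simple a = u := cs.simple_mul_simple_cancel_right a
      rw [← hπm, hB, hkk, alternatingWord_succ, wordProd_concat,
        cs.simple_mul_simple_cancel_right]
    have := hs (alternatingWord a b k') (fun x hx => alternatingWord_mem x hx) hcon
    rw [length_alternatingWord] at this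
    omega
  have hklt : M a b = 0 ∨ k < M a b := by
    by_contra hcon
    push_neg at hcon
    obtain ⟨hm0, hmk⟩ := hcon
    set m := M a b with hm
    have hm2 : 2 ≤ m := by omega
    obtain ⟨pre, hp1, hp2, hp3⟩ := alt_decomp a b m (k - m)
    rw [show m + (k - m) = k by omega] at hp3
    have hbraid : cs.wordProd (alternatingWord a b m) = cs.wordProd (alternatingWord b a m) := by
      simpa [braidWord, ← M.symmetric a b] using cs.wordProd_braidWord_eq a b
    obtain ⟨mm, hmm⟩ : ∃ mm, m = mm + 1 := ⟨m - 1, by omega⟩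
    have htail : cs.wordProd (alternatingWord b a (mm + 1))
        = cs.wordProd (alternatingWord a b mm) * cs.simple a := by
      rw [alternatingWord_succ, wordProd_concat]
    have hu : u = cs.wordProd pre * cs.wordProd (alternatingWord a b mm) * cs.simple a := by
      rw [← hπm, hA, hp3, wordProd_append, hbraid, hmm, htail, mul_assoc]
    have hua : cs.wordProd (pre ++ alternatingWord a b mm) = u * cs.simple a := by
      rw [wordProd_append, hu, cs.simple_mul_simple_cancel_right]
    have := hs (pre ++ alternatingWord a b mm)
      (by
        intro x hx
        rcases List.mem_append.mp hx with hx | hx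
        · exact hp1 x hx
        · exact alternatingWord_mem x hx) hua
    rw [List.length_append, hp2, length_alternatingWord] at this
    omega
  refine ⟨if Even k then Sfun (M a b) (k+1) else Sfun (M a b) k,
    if Even k then Sfun (M a b) k else Sfun (M a b) (k+1), ?_, ?_, ?_⟩
  · split_ifs
    · exact Sfun_nonneg (by omega)
    · exact Sfun_nonneg (by omega)
  · split_ifs
    · exact Sfun_nonneg (by omega)
    · exact Sfun_nonneg (by omega)
  · rw [← hπm, hA]
    exact rho_alt cs ρ hρ hab k

/-- Key lemma: if `ℓ(w · a) > ℓ(w)` then `w α_a` is a nonnegative vector. -/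
theorem pos_of_length_increase :
    ∀ n : ℕ, ∀ w : W, cs.length w ≤ n → ∀ a : B,
      cs.length w < cs.length (w * cs.simple a) → ∀ x : B, 0 ≤ ρ w (simpleRoot a) x := by
  intro n
  induction n with
  | zero =>
    intro w hw a _ x
    classical
    have hw1 : w = 1 := cs.length_eq_zero_iff.mp (by omega)
    rw [hw1, map_one, lequiv_one_apply, simpleRoot, Finsupp.single_apply]
    split_ifs <;> norm_num
  | succ n ih =>
    intro w hw a ha x
    by_cases hwn : cs.length w ≤ n
    · exact ih w hwn a ha x
    have hwl : cs.length w = n + 1 := by omega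
    have hw1 : w ≠ 1 := by
      intro h
      rw [h, cs.length_one] at hwl
      omega
    classical
    obtain ⟨t, htd⟩ := cs.exists_rightDescent_of_ne_one hw1
    have htlen : cs.length (w * cs.simple t) + 1 = cs.length w := cs.isRightDescent_iff.mp htd
    have hat : a ≠ t := by
      intro h
      subst h
      exact absurd htd (by simp only [IsRightDescent]; omega)
    -- the set of lengths of `w·(word in a,t)⁻¹` realizing an additive decomposition
    set P : ℕ → Prop := fun l => ∃ ω : List B, (∀ x ∈ ω, x = a ∨ x = t) ∧
      cs.length (w * (cs.wordProd ω)⁻¹) = l ∧ l + ω.length = cs.length w with hP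
    have hPex : ∃ l, P l := ⟨cs.length w, [], by simp, by simp, by simp⟩
    set l₀ := Nat.find hPex with hl₀
    obtain ⟨ω₀, hω₀, hv, hsum⟩ := Nat.find_spec hPex
    set v := w * (cs.wordProd ω₀)⁻¹ with hvdef
    have hwvu : w = v * cs.wordProd ω₀ := by
      rw [hvdef, inv_mul_cancel_right]
    have hl₀le : l₀ ≤ cs.length w - 1 := by
      apply Nat.find_min'
      refine ⟨[t], by simp, ?_, ?_⟩
      · rw [wordProd_singleton, cs.inv_simple]
        omega
      · simp
        omega
    -- both `a` and `t` increase the length of `v`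
    have hvinc : ∀ y : B, (y = a ∨ y = t) → cs.length v < cs.length (v * cs.simple y) := by
      intro y hy
      by_contra hcon
      push_neg at hcon
      have hne := cs.length_mul_simple_ne v y
      have hlt : cs.length (v * cs.simple y) < cs.length v := by omega
      have heq : cs.length (v * cs.simple y) + 1 = cs.length v := cs.isRightDescent_iff.mp hlt
      have hl₀1 : 1 ≤ l₀ := by
        rw [hv] at heq
        omega
      have : P (l₀ - 1) := by
        refine ⟨y :: ω₀, ?_, ?_, ?_⟩
        · intro z hz
          rcases List.mem_cons.mp hz with rfl | hz
          · exact hy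
          · exact hω₀ z hz
        · rw [wordProd_cons, mul_inv_rev, cs.inv_simple, ← mul_assoc, ← hvdef]
          rw [hv] at heq
          omega
        · rw [List.length_cons]
          rw [hv] at heq
          omega
      have := Nat.find_min hPex (m := l₀ - 1) (by omega)
      exact this ‹P (l₀ - 1)›
    have hva := ih v (by omega) a (hvinc a (Or.inl rfl))
    have hvt := ih v (by omega) t (hvinc t (Or.inr rfl))
    -- a minimal `{a,t}`-word for `π ω₀`
    set Q : ℕ → Prop := fun kk => ∃ ω : List B, (∀ x ∈ ω, x = a ∨ x = t) ∧
      ω.length = kk ∧ cs.wordProd ω = cs.wordProd ω₀ with hQdef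
    have hQex : ∃ kk, Q kk := ⟨ω₀.length, ω₀, hω₀, rfl, rfl⟩
    set k₀ := Nat.find hQex with hk₀
    obtain ⟨ωm, hm1, hm2, hm3⟩ := Nat.find_spec hQex
    have hmin : ∀ ω' : List B, (∀ x ∈ ω', x = a ∨ x = t) →
        cs.wordProd ω' = cs.wordProd ω₀ → k₀ ≤ ω'.length :=
      fun ω' h1 h2 => Nat.find_min' hQex ⟨ω', h1, rfl, h2⟩
    have hk₀le : k₀ ≤ ω₀.length := hmin ω₀ hω₀ rfl
    have hsgrow : ∀ ω' : List B, (∀ x ∈ ω', x = a ∨ x = t) →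
        cs.wordProd ω' = cs.wordProd ω₀ * cs.simple a → k₀ < ω'.length := by
      intro ω' h1 h2
      have h3 : w * cs.simple a = v * cs.wordProd ω' := by
        rw [h2, hwvu, mul_assoc]
      have h4 : cs.length (w * cs.simple a) ≤ l₀ + ω'.length := by
        rw [h3]
        calc cs.length (v * cs.wordProd ω') ≤ cs.length v + cs.length (cs.wordProd ω') :=
              cs.length_mul_le v _
          _ ≤ l₀ + ω'.length := by
              have := cs.length_wordProd_le ω'
              omega
      omega
    obtain ⟨p, q, hp, hq, hpq⟩ := cone cs ρ hρ hat (cs.wordProd ω₀) k₀ ωm hm1 hm2 hm3 hmin hsgrow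
    rw [hwvu, map_mul, lequiv_mul_apply, hpq, map_add, map_smul, map_smul]
    rw [Finsupp.add_apply, Finsupp.smul_apply, Finsupp.smul_apply, smul_eq_mul, smul_eq_mul]
    have := hva x
    have := hvt x
    positivity

/-- Every root is coordinatewise nonnegative or coordinatewise nonpositive. -/
theorem root_dichotomy (γ : B →₀ ℝ) (hγ : γ ∈ rootSet cs ρ) :
    (∀ x, 0 ≤ γ x) ∨ (∀ x, γ x ≤ 0) := by
  obtain ⟨w, a, rfl⟩ := hγ
  rcases lt_or_gt_of_ne (cs.length_mul_simple_ne w a) with hlt | hgt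
  · right
    intro x
    have h1 : cs.length (w * cs.simple a) <
        cs.length ((w * cs.simple a) * cs.simple a) := by
      rw [cs.simple_mul_simple_cancel_right]
      exact hlt
    have h2 := pos_of_length_increase cs ρ hρ (cs.length (w * cs.simple a))
      (w * cs.simple a) le_rfl a h1 x
    have h3 : ρ w (simpleRoot a) = - ρ (w * cs.simple a) (simpleRoot a) := by
      conv_lhs => rw [show w = (w * cs.simple a) * cs.simple a from
        (cs.simple_mul_simple_cancel_right a).symm]
      rw [map_mul, lequiv_mul_apply, rho_simple_self cs ρ hρ a, map_neg]
    rw [h3, Finsupp.neg_apply]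
    linarith
  · left
    exact pos_of_length_increase cs ρ hρ (cs.length w) w le_rfl a hgt

end rho

theorem rho_inv_apply (w : W) (v : B →₀ ℝ) : ρ w⁻¹ (ρ w v) = v := by
  rw [← lequiv_mul_apply, ← map_mul, inv_mul_cancel, map_one, lequiv_one_apply]

theorem root_apply_ne_zero (γ : B →₀ ℝ) (hγ : γ ∈ rootSet cs ρ) : ∃ x, γ x ≠ 0 := by
  obtain ⟨w, a, rfl⟩ := hγ
  by_contra h
  push_neg at h
  have h0 : ρ w (simpleRoot a) = 0 := Finsupp.ext fun x => by rw [h x, Finsupp.zero_apply]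
  have h1 : simpleRoot a = 0 := (ρ w).injective (h0.trans (map_zero _).symm)
  have h2 : (simpleRoot a : B →₀ ℝ) a = 1 := Finsupp.single_eq_same
  rw [h1, Finsupp.zero_apply] at h2
  norm_num at h2

theorem rho_apply_eq_sum (w : W) (γ : B →₀ ℝ) :
    ρ w γ = γ.sum fun u c => c • ρ w (Finsupp.single u 1) := by
  conv_lhs => rw [← Finsupp.sum_single γ]
  rw [map_finsuppSum]
  apply Finsupp.sum_congr
  intro u _
  rw [show Finsupp.single u (γ u) = γ u • Finsupp.single u (1:ℝ) by
    rw [Finsupp.smul_single', mul_one], map_smul]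

end Stmt8Aux

theorem stmt_8 {B W : Type*} [Group W] {M : CoxeterMatrix B} (cs : CoxeterSystem M W)
    (ρ : W →* ((B →₀ ℝ) ≃ₗ[ℝ] (B →₀ ℝ)))
    (hρ : ∀ (s : B) (v : B →₀ ℝ),
      ρ (cs.simple s) v = v - (2 * cForm M (simpleRoot s) v) • simpleRoot s)
    (w : W) (I J : Set B) (hdisj : I ∩ J = ∅)
    (hI : (fun v => ρ w v) '' (simpleRoot '' I) = simpleRoot '' I)
    (hJ : ∀ s ∈ J, ∀ t, (ρ w (simpleRoot s)) t ≤ 0) :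
    {γ | γ ∈ rootSet cs ρ ∧ (∀ t, 0 ≤ γ t) ∧ (∀ t ∉ I ∪ J, γ t = 0) ∧
        ∀ t, (ρ w γ) t ≤ 0} =
      {γ | γ ∈ rootSet cs ρ ∧ (∀ t, 0 ≤ γ t) ∧ (∀ t ∉ I ∪ J, γ t = 0)} \
        {γ | γ ∈ rootSet cs ρ ∧ ∀ t ∉ I, γ t = 0} := by
  classical
  have hIimg : ∀ u ∈ I, ∃ u' ∈ I, ρ w (Finsupp.single u (1:ℝ)) = simpleRoot u' := by
    intro u huI
    have hmem : ρ w (simpleRoot u) ∈ (fun v => ρ w v) '' (simpleRoot '' I) :=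
      ⟨simpleRoot u, ⟨u, huI, rfl⟩, rfl⟩
    rw [hI] at hmem
    obtain ⟨u', hu'I, h⟩ := hmem
    exact ⟨u', hu'I, h.symm⟩
  have hIinv : ∀ u ∈ I, ∃ u' ∈ I, ρ w⁻¹ (Finsupp.single u (1:ℝ)) = simpleRoot u' := by
    intro u huI
    have hmem : simpleRoot u ∈ (fun v => ρ w v) '' (simpleRoot '' I) := by
      rw [hI]; exact ⟨u, huI, rfl⟩
    obtain ⟨z, ⟨u', hu'I, hz1⟩, hz2⟩ := hmem
    refine ⟨u', hu'I, ?_⟩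
    rw [show Finsupp.single u (1:ℝ) = simpleRoot u from rfl, ← hz2, ← hz1,
      Stmt8Aux.rho_inv_apply]
  ext γ
  simp only [Set.mem_setOf_eq, Set.mem_diff]
  constructor
  · rintro ⟨hroot, hpos, hsupp, hneg⟩
    refine ⟨⟨hroot, hpos, hsupp⟩, ?_⟩
    rintro ⟨-, hsuppI⟩
    obtain ⟨x₁, hx₁⟩ := Stmt8Aux.root_apply_ne_zero cs ρ γ hroot
    have hge : ∀ x, 0 ≤ (ρ w γ) x := by
      intro x
      rw [Stmt8Aux.rho_apply_eq_sum ρ w γ, Finsupp.sum_apply, Finsupp.sum]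
      apply Finset.sum_nonneg
      intro u hu
      have huI : u ∈ I := by
        by_contra h
        exact (Finsupp.mem_support_iff.mp hu) (hsuppI u h)
      obtain ⟨u', hu'I, hu'⟩ := hIimg u huI
      rw [Finsupp.smul_apply, hu', smul_eq_mul]
      have h1 := hpos u
      rw [simpleRoot, Finsupp.single_apply]
      split_ifs <;> [linarith; simp]
    have hzero : γ = 0 := by
      have h0 : ρ w γ = 0 := Finsupp.ext fun x => by
        rw [Finsupp.zero_apply]
        exact le_antisymm (hneg x) (hge x)
      exact (ρ w).injective (h0.trans (map_zero _).symm)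
    rw [hzero] at hx₁
    exact hx₁ rfl
  · rintro ⟨⟨hroot, hpos, hsupp⟩, hnot⟩
    refine ⟨hroot, hpos, hsupp, ?_⟩
    have hex : ∃ t₀, t₀ ∉ I ∧ γ t₀ ≠ 0 := by
      by_contra h
      push_neg at h
      exact hnot ⟨hroot, fun t ht => h t ht⟩
    obtain ⟨t₀, ht₀I, ht₀⟩ := hex
    have ht₀J : t₀ ∈ J := by
      by_contra h
      exact ht₀ (hsupp t₀ (fun hmem => by
        rcases hmem with h1 | h1
        · exact ht₀I h1
        · exact h h1))
    have hwγroot : ρ w γ ∈ rootSet cs ρ := by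
      obtain ⟨w', a, hγ⟩ := hroot
      rw [hγ, ← Stmt8Aux.lequiv_mul_apply, ← map_mul]
      exact ⟨w * w', a, rfl⟩
    rcases Stmt8Aux.root_dichotomy cs ρ hρ _ hwγroot with hge | hle
    swap
    · exact hle
    exfalso
    set δ := ρ w (simpleRoot t₀) with hδ
    have hδneg : ∀ x, δ x ≤ 0 := hJ t₀ ht₀J
    have hδx₀ : ∃ x₀, x₀ ∉ I ∧ δ x₀ ≠ 0 := by
      by_contra h
      push_neg at h
      have h1 : ρ w⁻¹ δ = simpleRoot t₀ := by rw [hδ, Stmt8Aux.rho_inv_apply]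
      have h2 : (ρ w⁻¹ δ) t₀ = 1 := by rw [h1]; exact Finsupp.single_eq_same
      have h3 : (ρ w⁻¹ δ) t₀ = 0 := by
        rw [Stmt8Aux.rho_apply_eq_sum ρ w⁻¹ δ, Finsupp.sum_apply, Finsupp.sum]
        apply Finset.sum_eq_zero
        intro u hu
        have huI : u ∈ I := by
          by_contra hc
          exact Finsupp.mem_support_iff.mp hu (h u hc)
        obtain ⟨u', hu'I, hu'⟩ := hIinv u huI
        rw [Finsupp.smul_apply, hu', smul_eq_mul, simpleRoot, Finsupp.single_apply,
          if_neg (fun hh : u' = t₀ => ht₀I (hh ▸ hu'I)), mul_zero]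
      rw [h2] at h3
      norm_num at h3
    obtain ⟨x₀, hx₀I, hx₀⟩ := hδx₀
    have hlt : (ρ w γ) x₀ < 0 := by
      rw [Stmt8Aux.rho_apply_eq_sum ρ w γ, Finsupp.sum_apply, Finsupp.sum]
      have hterm : ∀ u ∈ γ.support, (γ u • ρ w (Finsupp.single u 1)) x₀ ≤ (0:ℝ) := by
        intro u hu
        rw [Finsupp.smul_apply, smul_eq_mul]
        by_cases huI : u ∈ I
        · obtain ⟨u', hu'I, hu'⟩ := hIimg u huI
          rw [hu', simpleRoot, Finsupp.single_apply,
            if_neg (fun hh : u' = x₀ => hx₀I (hh ▸ hu'I)), mul_zero]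
        · have huJ : u ∈ J := by
            have hIJ : u ∈ I ∪ J := by
              by_contra hc
              exact Finsupp.mem_support_iff.mp hu (hsupp u hc)
            rcases hIJ with h1 | h1
            · exact absurd h1 huI
            · exact h1
          exact mul_nonpos_of_nonneg_of_nonpos (hpos u) (hJ u huJ x₀)
      have hstrict : ∃ u ∈ γ.support, (γ u • ρ w (Finsupp.single u 1)) x₀ < (0:ℝ) := by
        refine ⟨t₀, Finsupp.mem_support_iff.mpr ht₀, ?_⟩
        rw [Finsupp.smul_apply, smul_eq_mul]
        have hγpos : 0 < γ t₀ := lt_of_le_of_ne (hpos t₀) (Ne.symm ht₀)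
        have hδlt : (ρ w (Finsupp.single t₀ 1)) x₀ < 0 :=
          lt_of_le_of_ne (hδneg x₀) hx₀
        exact mul_neg_of_pos_of_neg hγpos hδlt
      have := Finset.sum_lt_sum hterm hstrict
      simpa using this
    linarith [hge x₀]
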